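/- Let f : ℕ → ℂ and let z ∈ ℂ be such that the series ∑_{n≥0} |f_n| |z|^n converges. Then ∑_{n≥0} f_n z^n / (3n)! = (1/(2π)) ∫_{-π}^{π} F(z e^{-i t}) · E(e^{i t}) dt, where F(w) = ∑_{n≥0} f_n w^n and E(w) = ∑_{m≥0} w^m / (3m)!. -/

import Mathlib

open MeasureTheory intervalIntegral

lemma key_int (k : ℤ) :
    (∫ t in (-Real.pi)..Real.pi, Complex.exp (Complex.I * k * t)) =
      if k = 0 then ((2 * Real.pi : ℝ) : ℂ) else 0 := by
  rcases eq_or_ne k 0 with hk | hk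
  · simp [hk, two_mul]
  · have hc : (Complex.I * k) ≠ 0 := by
      simp [Complex.I_ne_zero, hk]
    rw [if_neg hk, integral_exp_mul_complex hc]
    have h1 : Complex.exp (Complex.I * k * (Real.pi : ℂ)) =
        Complex.exp (Complex.I * k * ((-Real.pi : ℝ) : ℂ)) := by
      rw [show Complex.I * k * (Real.pi : ℂ) =
          Complex.I * k * ((-Real.pi : ℝ) : ℂ) + (k : ℂ) * (2 * (Real.pi : ℂ) * Complex.I) by
        push_cast; ring, Complex.exp_add, Complex.exp_int_mul_two_pi_mul_I, mul_one]
    rw [h1, sub_self, zero_div]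

lemma norm_exp_I_mul (t : ℝ) : ‖Complex.exp (Complex.I * t)‖ = 1 := by
  simp [Complex.norm_exp]

lemma norm_exp_neg_I_mul (t : ℝ) : ‖Complex.exp (-(Complex.I * t))‖ = 1 := by
  simp [Complex.norm_exp]

lemma summable_E : Summable (fun m : ℕ => (1 : ℝ) / ((3 * m).factorial : ℝ)) := by
  refine Summable.of_nonneg_of_le (fun m => by positivity) (fun m => ?_)
    ((Real.summable_pow_div_factorial 1).congr (fun n => by rw [one_pow]))
  gcongr
  omega

/-- If `∑ ‖f n‖ ‖z‖^n` converges, then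
`∑_{n≥0} f_n z^n / (3n)! = (1/(2π)) ∫_{-π}^{π} F(z e^{-it}) E(e^{it}) dt`,
where `F(w) = ∑_{n≥0} f_n w^n` and `E(w) = ∑_{m≥0} w^m/(3m)!`. -/
theorem triple_factorial_integral_formula (f : ℕ → ℂ) (z : ℂ)
    (hsum : Summable (fun n : ℕ => ‖f n‖ * ‖z‖ ^ n)) :
    ∑' n : ℕ, f n * z ^ n / ((3 * n).factorial : ℂ) =
      ((2 * Real.pi : ℝ) : ℂ)⁻¹ *
        ∫ t in (-Real.pi)..Real.pi,
          (∑' n : ℕ, f n * (z * Complex.exp (-(Complex.I * (t : ℂ)))) ^ n) *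
            ∑' m : ℕ, Complex.exp (Complex.I * (t : ℂ)) ^ m / ((3 * m).factorial : ℂ) := by
  have hπ : (0 : ℝ) < Real.pi := Real.pi_pos
  set F : ℕ × ℕ → ℝ → ℂ := fun p t =>
    (f p.1 * (z * Complex.exp (-(Complex.I * (t : ℂ)))) ^ p.1) *
      (Complex.exp (Complex.I * (t : ℂ)) ^ p.2 / ((3 * p.2).factorial : ℂ)) with hF
  have hnorm1 : ∀ (t : ℝ) (n : ℕ),
      ‖f n * (z * Complex.exp (-(Complex.I * (t : ℂ)))) ^ n‖ = ‖f n‖ * ‖z‖ ^ n := by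
    intro t n
    rw [norm_mul, norm_pow, norm_mul, norm_exp_neg_I_mul, mul_one]
  have hnorm2 : ∀ (t : ℝ) (m : ℕ),
      ‖Complex.exp (Complex.I * (t : ℂ)) ^ m / ((3 * m).factorial : ℂ)‖ =
        1 / ((3 * m).factorial : ℝ) := by
    intro t m
    rw [norm_div, norm_pow, norm_exp_I_mul, one_pow]
    simp
  have hpt : ∀ t : ℝ,
      (∑' n : ℕ, f n * (z * Complex.exp (-(Complex.I * (t : ℂ)))) ^ n) *
        (∑' m : ℕ, Complex.exp (Complex.I * (t : ℂ)) ^ m / ((3 * m).factorial : ℂ)) =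
        ∑' p : ℕ × ℕ, F p t := by
    intro t
    exact tsum_mul_tsum_of_summable_norm
      ((summable_congr (fun n => hnorm1 t n)).2 hsum)
      ((summable_congr (fun m => hnorm2 t m)).2 summable_E)
  have hF_eq : ∀ (p : ℕ × ℕ) (t : ℝ), F p t =
      (f p.1 * z ^ p.1 / ((3 * p.2).factorial : ℂ)) *
        Complex.exp (Complex.I * (((p.2 : ℤ) - (p.1 : ℤ) : ℤ) : ℂ) * t) := by
    rintro ⟨n, m⟩ t
    have e1 : Complex.exp (-(Complex.I * (t : ℂ))) ^ n =
        Complex.exp ((n : ℂ) * (-(Complex.I * (t : ℂ)))) := (Complex.exp_nat_mul _ n).symm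
    have e2 : Complex.exp (Complex.I * (t : ℂ)) ^ m =
        Complex.exp ((m : ℂ) * (Complex.I * (t : ℂ))) := (Complex.exp_nat_mul _ m).symm
    simp only [hF, mul_pow]
    rw [e1, e2]
    rw [show (f n * (z ^ n * Complex.exp ((n : ℂ) * (-(Complex.I * (t : ℂ)))))) *
        (Complex.exp ((m : ℂ) * (Complex.I * (t : ℂ))) / ((3 * m).factorial : ℂ)) =
        (f n * z ^ n / ((3 * m).factorial : ℂ)) *
          (Complex.exp ((n : ℂ) * (-(Complex.I * (t : ℂ)))) *
            Complex.exp ((m : ℂ) * (Complex.I * (t : ℂ)))) by ring]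
    rw [← Complex.exp_add]
    congr 2
    push_cast
    ring
  have hF_int : ∀ p : ℕ × ℕ, IntegrableOn (F p) (Set.Ioc (-Real.pi) Real.pi) := by
    intro p
    apply Continuous.integrableOn_Ioc
    simp only [hF]
    fun_prop
  have hF_intval : ∀ p : ℕ × ℕ, (∫ t in Set.Ioc (-Real.pi) Real.pi, F p t) =
      if p.1 = p.2 then ((2 * Real.pi : ℝ) : ℂ) * (f p.1 * z ^ p.1 / ((3 * p.1).factorial : ℂ))
      else 0 := by
    rintro ⟨n, m⟩
    have h0 : (∫ t in Set.Ioc (-Real.pi) Real.pi, F (n, m) t) =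
        ∫ t in (-Real.pi)..Real.pi, F (n, m) t := by
      rw [intervalIntegral.integral_of_le (by linarith)]
    rw [h0]
    simp only [hF_eq]
    rw [intervalIntegral.integral_const_mul, key_int ((m : ℤ) - (n : ℤ))]
    rcases eq_or_ne n m with h | h
    · subst h
      simp [mul_comm]
    · rw [if_neg (by omega), if_neg h, mul_zero]
  have hF_normsum : Summable (fun p : ℕ × ℕ =>
      ∫ t in Set.Ioc (-Real.pi) Real.pi, ‖F p t‖) := by
    have hcongr : ∀ p : ℕ × ℕ, (∫ t in Set.Ioc (-Real.pi) Real.pi, ‖F p t‖) =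
        (2 * Real.pi) * ((‖f p.1‖ * ‖z‖ ^ p.1) * (1 / ((3 * p.2).factorial : ℝ))) := by
      intro p
      have hc : (fun t : ℝ => ‖F p t‖) =
          fun _ : ℝ => (‖f p.1‖ * ‖z‖ ^ p.1) * (1 / ((3 * p.2).factorial : ℝ)) := by
        funext t
        rw [hF, norm_mul, hnorm1 t p.1, hnorm2 t p.2]
      rw [hc, setIntegral_const, Real.volume_real_Ioc_of_le (by linarith), smul_eq_mul]
      ring_nf
    rw [summable_congr hcongr]
    exact (hsum.mul_of_nonneg summable_E (fun n => by positivity)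
      (fun m => by positivity)).mul_left _
  have hswap : (∫ t in Set.Ioc (-Real.pi) Real.pi, ∑' p : ℕ × ℕ, F p t) =
      ∑' p : ℕ × ℕ, ∫ t in Set.Ioc (-Real.pi) Real.pi, F p t :=
    (integral_tsum_of_summable_integral_norm hF_int hF_normsum).symm
  rw [intervalIntegral.integral_of_le (by linarith : -Real.pi ≤ Real.pi)]
  calc ∑' n : ℕ, f n * z ^ n / ((3 * n).factorial : ℂ)
      = ((2 * Real.pi : ℝ) : ℂ)⁻¹ *
          (((2 * Real.pi : ℝ) : ℂ) * ∑' n : ℕ, f n * z ^ n / ((3 * n).factorial : ℂ)) := by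
        rw [← mul_assoc, inv_mul_cancel₀ (by
          exact_mod_cast (by positivity : (2 * Real.pi : ℝ) ≠ 0)), one_mul]
    _ = ((2 * Real.pi : ℝ) : ℂ)⁻¹ *
          ∫ t in Set.Ioc (-Real.pi) Real.pi,
            (∑' n : ℕ, f n * (z * Complex.exp (-(Complex.I * (t : ℂ)))) ^ n) *
              ∑' m : ℕ, Complex.exp (Complex.I * (t : ℂ)) ^ m / ((3 * m).factorial : ℂ) := by
        congr 1
        have h1 : (∫ t in Set.Ioc (-Real.pi) Real.pi,
            (∑' n : ℕ, f n * (z * Complex.exp (-(Complex.I * (t : ℂ)))) ^ n) *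
              ∑' m : ℕ, Complex.exp (Complex.I * (t : ℂ)) ^ m / ((3 * m).factorial : ℂ)) =
            ∑' p : ℕ × ℕ, ∫ t in Set.Ioc (-Real.pi) Real.pi, F p t := by
          rw [← hswap]
          exact setIntegral_congr_fun measurableSet_Ioc (fun t _ => hpt t)
        rw [h1]
        have hdiag : ∀ p : ℕ × ℕ, p ∉ Set.range (fun n : ℕ => ((n, n) : ℕ × ℕ)) →
            (∫ t in Set.Ioc (-Real.pi) Real.pi, F p t) = 0 := by
          rintro ⟨n, m⟩ hp
          rw [hF_intval]
          rw [if_neg]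
          intro h
          exact hp ⟨n, Prod.ext rfl (by simpa using h)⟩
        have hinj : Function.Injective (fun n : ℕ => ((n, n) : ℕ × ℕ)) := by
          intro a b h
          simpa using congrArg Prod.fst h
        rw [← hinj.tsum_eq (by
          intro p hp
          by_contra hmem
          exact hp (hdiag p hmem))]
        have h2 : ∀ k : ℕ, (∫ t in Set.Ioc (-Real.pi) Real.pi, F (k, k) t) =
            ((2 * Real.pi : ℝ) : ℂ) * (f k * z ^ k / ((3 * k).factorial : ℂ)) := fun k => by
          rw [hF_intval]; simp
        rw [tsum_congr h2, tsum_mul_left]
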